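/- Let σ and G be symmetric positive semidefinite n×n real matrices. Then the matrix P = I + σG is invertible. -/

import Mathlib

open Matrix

/-- For symmetric positive semidefinite `σ` and `G`, the matrix
`P = I + σG` is invertible. -/
theorem one_add_psd_mul_psd_isUnit
    (n : ℕ) (σ G : Matrix (Fin n) (Fin n) ℝ)
    (hσ : σ.PosSemidef) (hG : G.PosSemidef) :
    IsUnit (1 + σ * G) := by
  rw [Matrix.isUnit_iff_isUnit_det]
  obtain ⟨S, hS, hSS⟩ : ∃ S : Matrix (Fin n) (Fin n) ℝ, S.PosSemidef ∧ S * S = σ := by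
    open scoped MatrixOrder in
    exact ⟨CFC.sqrt σ, Matrix.nonneg_iff_posSemidef.mp (CFC.sqrt_nonneg σ),
      CFC.sqrt_mul_sqrt_self σ (Matrix.nonneg_iff_posSemidef.mpr hσ)⟩
  have h1 : σ * G = S * (S * G) := by
    rw [← Matrix.mul_assoc, hSS]
  rw [h1, Matrix.det_one_add_mul_comm]
  have hpsd : (S * G * S).PosSemidef := by
    have := hG.conjTranspose_mul_mul_same S
    rwa [hS.isHermitian.eq] at this
  have hpd : (1 + S * G * S).PosDef :=
    Matrix.PosDef.add_posSemidef Matrix.PosDef.one hpsd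
  exact isUnit_iff_ne_zero.mpr hpd.det_pos.ne'
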